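/- In a bicategory B, a 1-cell f : X ⟶ Y admits a left adjoint if and only if the right Kan extension of the identity 1-cell 1_X along f exists and is preserved by f (i.e. the composite f ∘ ran_f(1_X), equipped with the whiskered counit 2-cell, is a right Kan extension of f along f). Moreover, in that case, writing l for the left adjoint of f, for every object Z and every 1-cell x : X ⟶ Z the composite x ∘ l, equipped with the 2-cell obtained by whiskering x with the counit of the adjunction l ⊣ f, is an absolute right Kan extension of x along f (it is preserved by every 1-cell out of Z). -/

import Mathlib

universe w v u

open CategoryTheory CategoryTheory.Bicategory

variable {B : Type u} [Bicategory.{w, v} B]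

/-- `(r, ε)` is a right Kan extension of `x : A ⟶ X` along `f : A ⟶ Y`:
for every `y : Y ⟶ X`, composition with `ε` induces a bijection between
2-cells `y ⟶ r` and 2-cells `f ≫ y ⟶ x`. -/
def IsRanCounit {A Y X : B} (f : A ⟶ Y) (x : A ⟶ X) (r : Y ⟶ X) (eps : f ≫ r ⟶ x) : Prop :=
  ∀ (y : Y ⟶ X) (α : f ≫ y ⟶ x), ∃! τ : y ⟶ r, f ◁ τ ≫ eps = α


theorem isRanCounit_of_iso {A Y X : B} {f : A ⟶ Y} {x : A ⟶ X} {r r' : Y ⟶ X}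
    (φ : r' ≅ r) {eps : f ≫ r ⟶ x} {eps' : f ≫ r' ⟶ x} (heps : eps' = f ◁ φ.hom ≫ eps)
    (H : IsRanCounit f x r eps) : IsRanCounit f x r' eps' := by
  intro y α
  obtain ⟨τ, hτ, uniq⟩ := H y α
  refine ⟨τ ≫ φ.inv, ?_, ?_⟩
  · simp only [heps, Bicategory.whiskerLeft_comp, Category.assoc]
    rw [← Category.assoc (f ◁ φ.inv), ← Bicategory.whiskerLeft_comp, φ.inv_hom_id]
    simpa using hτ
  · intro τ' hτ'
    have : τ' ≫ φ.hom = τ := by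
      apply uniq
      rw [← hτ', heps]
      simp [Bicategory.whiskerLeft_comp]
    rw [← this]; simp

theorem aux_isRan {X Y : B} {l : Y ⟶ X} {f : X ⟶ Y} (adj : Bicategory.Adjunction l f)
    {Z : B} (x : X ⟶ Z) :
    IsRanCounit f x (l ≫ x) ((α_ f l x).inv ≫ adj.counit ▷ x ≫ (λ_ x).hom) := by
  intro y α
  refine ⟨(λ_ y).inv ≫ adj.unit ▷ y ≫ (α_ l f y).hom ≫ l ◁ α, ?_, ?_⟩
  · calc f ◁ ((λ_ y).inv ≫ adj.unit ▷ y ≫ (α_ l f y).hom ≫ l ◁ α) ≫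
        ((α_ f l x).inv ≫ adj.counit ▷ x ≫ (λ_ x).hom)
      _ = 𝟙 _ ⊗≫ f ◁ adj.unit ▷ y ⊗≫ ((f ≫ l) ◁ α ≫ adj.counit ▷ x) ⊗≫ 𝟙 _ := by
          bicategory
      _ = 𝟙 _ ⊗≫ (f ◁ adj.unit ⊗≫ adj.counit ▷ f) ▷ y ⊗≫ α ⊗≫ 𝟙 _ := by
          rw [whisker_exchange]; bicategory
      _ = α := by rw [← rightZigzag, adj.right_triangle]; bicategory
  · intro τ hτ
    symm
    calc (λ_ y).inv ≫ adj.unit ▷ y ≫ (α_ l f y).hom ≫ l ◁ α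
      _ = 𝟙 _ ⊗≫ (adj.unit ▷ y ≫ (l ≫ f) ◁ τ) ⊗≫ l ◁ adj.counit ▷ x ⊗≫ 𝟙 _ := by
          rw [← hτ]; bicategory
      _ = 𝟙 _ ⊗≫ τ ⊗≫ (adj.unit ▷ l ⊗≫ l ◁ adj.counit) ▷ x ⊗≫ 𝟙 _ := by
          rw [← whisker_exchange]; bicategory
      _ = τ := by rw [← leftZigzag, adj.left_triangle]; bicategory

theorem aux_isRan_whisker {X Y : B} {l : Y ⟶ X} {f : X ⟶ Y} (adj : Bicategory.Adjunction l f)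
    {Z : B} (x : X ⟶ Z) {W : B} (h : Z ⟶ W) :
    IsRanCounit f (x ≫ h) ((l ≫ x) ≫ h)
      ((α_ f (l ≫ x) h).inv ≫
        ((α_ f l x).inv ≫ adj.counit ▷ x ≫ (λ_ x).hom) ▷ h) := by
  refine isRanCounit_of_iso (α_ l x h) ?_ (aux_isRan adj (x ≫ h))
  bicategory

/-- A 1-cell `f : X ⟶ Y` admits a left adjoint iff the right Kan extension of `𝟙 X`
along `f` exists and is preserved by `f`; moreover, in that case, for every `x : X ⟶ Z`
the composite of `x` with the left adjoint `l`, equipped with the 2-cell obtained by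
whiskering `x` with the counit of `l ⊣ f`, is an absolute right Kan extension of `x`
along `f`. -/
theorem statement0 {X Y : B} (f : X ⟶ Y) :
    ((∃ l : Y ⟶ X, Nonempty (Bicategory.Adjunction l f)) ↔
      ∃ (r : Y ⟶ X) (eps : f ≫ r ⟶ 𝟙 X),
        IsRanCounit f (𝟙 X) r eps ∧
        IsRanCounit f (𝟙 X ≫ f) (r ≫ f) ((α_ f r f).inv ≫ eps ▷ f)) ∧
    (∀ (l : Y ⟶ X) (adj : Bicategory.Adjunction l f) (Z : B) (x : X ⟶ Z),
      IsRanCounit f x (l ≫ x) ((α_ f l x).inv ≫ adj.counit ▷ x ≫ (λ_ x).hom) ∧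
      ∀ (W : B) (h : Z ⟶ W),
        IsRanCounit f (x ≫ h) ((l ≫ x) ≫ h)
          ((α_ f (l ≫ x) h).inv ≫
            ((α_ f l x).inv ≫ adj.counit ▷ x ≫ (λ_ x).hom) ▷ h)) := by
  constructor
  · constructor
    · rintro ⟨l, ⟨adj⟩⟩
      refine ⟨l ≫ 𝟙 X, (α_ f l (𝟙 X)).inv ≫ adj.counit ▷ 𝟙 X ≫ (λ_ (𝟙 X)).hom,
        aux_isRan adj (𝟙 X), ?_⟩
      exact aux_isRan_whisker adj (𝟙 X) f
    · rintro ⟨r, eps, H1, H2⟩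
      obtain ⟨η, hη, -⟩ := H2 (𝟙 Y) ((ρ_ f).hom ≫ (λ_ f).inv)
      have hrt : rightZigzag η eps = (ρ_ f).hom ≫ (λ_ f).inv := by
        rw [← hη]; dsimp only [rightZigzag]; bicategory
      have hlt : leftZigzag η eps = (λ_ r).hom ≫ (ρ_ r).inv := by
        obtain ⟨τ, hτ, uniq⟩ := H1 r eps
        have h1 : (𝟙 r : r ⟶ r) = τ := uniq _ (by simp)
        have h2 : (λ_ r).inv ≫ η ▷ r ≫ (α_ r f r).hom ≫ r ◁ eps ≫ (ρ_ r).hom = τ := by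
          apply uniq
          calc f ◁ ((λ_ r).inv ≫ η ▷ r ≫ (α_ r f r).hom ≫ r ◁ eps ≫ (ρ_ r).hom) ≫ eps
            _ = 𝟙 _ ⊗≫ f ◁ η ▷ r ⊗≫ ((f ≫ r) ◁ eps ≫ eps ▷ 𝟙 X) ⊗≫ 𝟙 _ := by bicategory
            _ = 𝟙 _ ⊗≫ (f ◁ η ⊗≫ eps ▷ f) ▷ r ⊗≫ eps ⊗≫ 𝟙 _ := by
                rw [whisker_exchange]; bicategory
            _ = eps := by rw [← rightZigzag, hrt]; bicategory
        have h3 : (λ_ r).inv ≫ η ▷ r ≫ (α_ r f r).hom ≫ r ◁ eps ≫ (ρ_ r).hom = 𝟙 r := by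
          rw [h2, ← h1]
        dsimp only [leftZigzag]
        calc η ▷ r ⊗≫ r ◁ eps
          _ = (λ_ r).hom ≫ ((λ_ r).inv ≫ η ▷ r ≫ (α_ r f r).hom ≫ r ◁ eps ≫ (ρ_ r).hom) ≫
              (ρ_ r).inv := by bicategory
          _ = (λ_ r).hom ≫ (ρ_ r).inv := by rw [h3]; simp
      exact ⟨r, ⟨⟨η, eps, hlt, hrt⟩⟩⟩
  · intro l adj Z x
    exact ⟨aux_isRan adj x, fun W h => aux_isRan_whisker adj x h⟩
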